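/- The one-parameter family of transport maps is closed under composition: for all γ, δ ∈ (0,6), the value F⁻¹_γ(δ) lies in (0,6), and for every x ∈ [0,6] one has F⁻¹_γ(F⁻¹_δ(x)) = F⁻¹_{F⁻¹_γ(δ)}(x). -/
import Mathlib


/-- The transport map `F⁻¹_γ(x) = 3xγ / (x(γ−3) + 3(6−γ))`. -/
noncomputable def Finv (γ x : ℝ) : ℝ := 3 * x * γ / (x * (γ - 3) + 3 * (6 - γ))

lemma denom_pos {γ x : ℝ} (hγ : γ ∈ Set.Ioo (0:ℝ) 6) (hx : x ∈ Set.Icc (0:ℝ) 6) :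
    0 < x * (γ - 3) + 3 * (6 - γ) := by
  obtain ⟨h1, h2⟩ := hγ; obtain ⟨h3, h4⟩ := hx
  nlinarith [mul_nonneg h3 h1.le, mul_nonneg (sub_nonneg.2 h4) (sub_nonneg.2 h2.le)]

lemma Finv_mem {γ x : ℝ} (hγ : γ ∈ Set.Ioo (0:ℝ) 6) (hx : x ∈ Set.Ioo (0:ℝ) 6) :
    Finv γ x ∈ Set.Ioo (0:ℝ) 6 := by
  have hd := denom_pos hγ (Set.Ioo_subset_Icc_self hx)
  obtain ⟨h1, h2⟩ := hγ; obtain ⟨h3, h4⟩ := hx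
  constructor
  · rw [Finv]; exact div_pos (by positivity) hd
  · rw [Finv, div_lt_iff₀ hd]; nlinarith

lemma Finv_mem_Icc {γ x : ℝ} (hγ : γ ∈ Set.Ioo (0:ℝ) 6) (hx : x ∈ Set.Icc (0:ℝ) 6) :
    Finv γ x ∈ Set.Icc (0:ℝ) 6 := by
  have hd := denom_pos hγ hx
  obtain ⟨h1, h2⟩ := hγ; obtain ⟨h3, h4⟩ := hx
  constructor
  · rw [Finv]; exact div_nonneg (by positivity) hd.le
  · rw [Finv, div_le_iff₀ hd]; nlinarith

theorem transport_map_closed_under_composition :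
    ∀ γ ∈ Set.Ioo (0 : ℝ) 6, ∀ δ ∈ Set.Ioo (0 : ℝ) 6,
      Finv γ δ ∈ Set.Ioo (0 : ℝ) 6 ∧
      ∀ x ∈ Set.Icc (0 : ℝ) 6, Finv γ (Finv δ x) = Finv (Finv γ δ) x := by
  intro γ hγ δ hδ
  refine ⟨Finv_mem hγ (by exact hδ), ?_⟩
  intro x hx
  have hd1 : 0 < x * (δ - 3) + 3 * (6 - δ) := denom_pos hδ hx
  have hy := Finv_mem_Icc hδ hx
  have hd2 : 0 < (Finv δ x) * (γ - 3) + 3 * (6 - γ) := denom_pos hγ hy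
  have hε := Finv_mem hγ hδ
  have hd3 : 0 < δ * (γ - 3) + 3 * (6 - γ) :=
    denom_pos hγ (Set.Ioo_subset_Icc_self hδ)
  have hd4 : 0 < x * (Finv γ δ - 3) + 3 * (6 - Finv γ δ) :=
    denom_pos hε hx
  unfold Finv at *
  field_simp
  ring
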